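/- Let p ≥ 1 with Hölder conjugate p' (1/p + 1/p' = 1), let (Q_j) be a finite partition of [0,T]^2 into essentially disjoint rectangles, let x : [0,T]^2 → ℝ, and set y := Σ_j |x(Q_j)|^{p−1} sgn(x(Q_j)) · 1_{Q̂_j}, where Q̂_j = (a,b]×(c,d] for Q_j = [a,b]×[c,d]. Then the controlled p'-variation of y satisfies |y|_{p'-var;[0,T]^2} ≤ 4 (Σ_j |x(Q_j)|^p)^{1/p'}. -/

import Mathlib

open Set
open scoped ENNReal NNReal

/-- A closed rectangle `[a,b] × [c,d] ⊆ ℝ²`, encoded by its four corner coordinates. -/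
structure Rect where
  a : ℝ
  b : ℝ
  c : ℝ
  d : ℝ

noncomputable instance : DecidableEq Rect := fun _ _ => Classical.dec _

/-- The closed rectangle as a subset of the plane. -/
def Rect.toSet (R : Rect) : Set (ℝ × ℝ) := Set.Icc R.a R.b ×ˢ Set.Icc R.c R.d

/-- The open interior of the rectangle. -/
def Rect.openSet (R : Rect) : Set (ℝ × ℝ) := Set.Ioo R.a R.b ×ˢ Set.Ioo R.c R.d

/-- The rectangle is well formed: `a ≤ b`, `c ≤ d`. -/
def Rect.Valid (R : Rect) : Prop := R.a ≤ R.b ∧ R.c ≤ R.d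

/-- Rectangular increment of `f` over `[a,b] × [c,d]`. -/
def Rect.inc (f : ℝ × ℝ → ℝ) (R : Rect) : ℝ :=
  f (R.b, R.d) - f (R.a, R.d) - f (R.b, R.c) + f (R.a, R.c)

/-- `P` is a partition of `R` into essentially disjoint rectangles. -/
def IsPartition (R : Rect) (P : Finset Rect) : Prop :=
  (∀ Q ∈ P, Q.Valid) ∧
  ((P : Set Rect).Pairwise fun Q Q' => Disjoint Q.openSet Q'.openSet) ∧
  (⋃ Q ∈ P, Q.toSet) = R.toSet

/-- The controlled `p`-variation of `f` over `R`, raised to the power `p`: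
`sup` over all partitions of `R` into essentially disjoint rectangles of
`Σ |f(A)|^p`.  So `|f|_{p-var;R} = (cVarSum p f R) ^ (1/p)`. -/
noncomputable def cVarSum (p : ℝ) (f : ℝ × ℝ → ℝ) (R : Rect) : ℝ≥0∞ :=
  ⨆ (P : Finset Rect) (_ : IsPartition R P),
    ∑ Q ∈ P, ENNReal.ofReal |Rect.inc f Q| ^ p

/-- The grid `p`-variation of `f` over `R`, raised to the power `p`:
`sup` over grid-like partitions (products of dissections of the two sides)
of `Σ_{i,j} |f([t_i,t_{i+1}] × [s_j,s_{j+1}])|^p`.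
So `V_p(f;R) = (gridVarSum p f R) ^ (1/p)`. -/
noncomputable def gridVarSum (p : ℝ) (f : ℝ × ℝ → ℝ) (R : Rect) : ℝ≥0∞ :=
  ⨆ (n : ℕ) (m : ℕ) (t : Fin (n+1) → ℝ) (s : Fin (m+1) → ℝ)
    (_ : Monotone t) (_ : Monotone s)
    (_ : t 0 = R.a) (_ : t (Fin.last n) = R.b)
    (_ : s 0 = R.c) (_ : s (Fin.last m) = R.d),
    ∑ i : Fin n, ∑ j : Fin m,
      ENNReal.ofReal |Rect.inc f ⟨t i.castSucc, t i.succ, s j.castSucc, s j.succ⟩| ^ p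

/-- The half-open version `(a,b] × (c,d]` of a rectangle. -/
def Rect.halfOpen (R : Rect) : Set (ℝ × ℝ) := Set.Ioc R.a R.b ×ˢ Set.Ioc R.c R.d

/-- with `y := Σ_j |x(Q_j)|^{p-1} sgn(x(Q_j)) 1_{Q̂_j}` for a partition
`(Q_j)` of `[0,T]²`, one has `|y|_{p'-var;[0,T]²} ≤ 4 (Σ_j |x(Q_j)|^p)^{1/p'}`,
where `p'` is the Hölder conjugate of `p`. -/
noncomputable def RectEps (Q A : Rect) : ℝ :=
  ((if A.b ∈ Set.Ioc Q.a Q.b then (1:ℝ) else 0) - (if A.a ∈ Set.Ioc Q.a Q.b then (1:ℝ) else 0)) *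
  ((if A.d ∈ Set.Ioc Q.c Q.d then (1:ℝ) else 0) - (if A.c ∈ Set.Ioc Q.c Q.d then (1:ℝ) else 0))

lemma inc_halfOpen_indicator (Q A : Rect) :
    Rect.inc (fun z => Set.indicator Q.halfOpen (fun _ => (1:ℝ)) z) A = RectEps Q A := by
  simp only [Rect.inc, Rect.halfOpen, Set.indicator_apply, Set.mem_prod, RectEps]
  by_cases h1 : A.b ∈ Set.Ioc Q.a Q.b <;> by_cases h2 : A.a ∈ Set.Ioc Q.a Q.b <;>
    by_cases h3 : A.d ∈ Set.Ioc Q.c Q.d <;> by_cases h4 : A.c ∈ Set.Ioc Q.c Q.d <;>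
    simp [h1, h2, h3, h4]

lemma abs_rectEps_le (Q A : Rect) : |RectEps Q A| ≤ 1 := by
  classical
  have key : ∀ (u v : Prop) (_ : Decidable u) (_ : Decidable v),
      |(@ite ℝ u ‹_› 1 0) - (@ite ℝ v ‹_› 1 0)| ≤ 1 := by
    intro u v _ _
    by_cases hu : u <;> by_cases hv : v <;> simp [hu, hv]
  unfold RectEps
  rw [abs_mul]
  exact mul_le_one₀ (key _ _ _ _) (abs_nonneg _) (key _ _ _ _)

lemma rectEps_ne_zero_x {Q A : Rect} (h : RectEps Q A ≠ 0) :
    (A.b ∈ Set.Ioc Q.a Q.b ∧ A.a ∉ Set.Ioc Q.a Q.b) ∨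
    (A.a ∈ Set.Ioc Q.a Q.b ∧ A.b ∉ Set.Ioc Q.a Q.b) := by
  classical
  unfold RectEps at h
  by_cases h1 : A.b ∈ Set.Ioc Q.a Q.b <;> by_cases h2 : A.a ∈ Set.Ioc Q.a Q.b <;>
    simp_all

lemma rectEps_ne_zero_y {Q A : Rect} (h : RectEps Q A ≠ 0) :
    (A.d ∈ Set.Ioc Q.c Q.d ∧ A.c ∉ Set.Ioc Q.c Q.d) ∨
    (A.c ∈ Set.Ioc Q.c Q.d ∧ A.d ∉ Set.Ioc Q.c Q.d) := by
  classical
  unfold RectEps at h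
  by_cases h1 : A.d ∈ Set.Ioc Q.c Q.d <;> by_cases h2 : A.c ∈ Set.Ioc Q.c Q.d <;>
    simp_all

lemma not_disjoint_of_mem_halfOpen {Q Q' : Rect} {z : ℝ × ℝ}
    (h : z ∈ Q.halfOpen) (h' : z ∈ Q'.halfOpen) : ¬ Disjoint Q.openSet Q'.openSet := by
  obtain ⟨⟨ha, hb⟩, hc, hd⟩ := h
  obtain ⟨⟨ha', hb'⟩, hc', hd'⟩ := h'
  intro hdisj
  set ε := min (z.1 - max Q.a Q'.a) (z.2 - max Q.c Q'.c) with hε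
  have hε1 : ε ≤ z.1 - max Q.a Q'.a := min_le_left _ _
  have hε2 : ε ≤ z.2 - max Q.c Q'.c := min_le_right _ _
  have hm1 : max Q.a Q'.a < z.1 := max_lt ha ha'
  have hm2 : max Q.c Q'.c < z.2 := max_lt hc hc'
  have hε0 : 0 < ε := lt_min (by linarith) (by linarith)
  have hx1 : Q.a ≤ max Q.a Q'.a := le_max_left _ _
  have hx2 : Q'.a ≤ max Q.a Q'.a := le_max_right _ _
  have hy1 : Q.c ≤ max Q.c Q'.c := le_max_left _ _
  have hy2 : Q'.c ≤ max Q.c Q'.c := le_max_right _ _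
  have mem1 : (z.1 - ε/2, z.2 - ε/2) ∈ Q.openSet :=
    ⟨⟨by simp only; linarith, by simp only; linarith⟩,
     ⟨by simp only; linarith, by simp only; linarith⟩⟩
  have mem2 : (z.1 - ε/2, z.2 - ε/2) ∈ Q'.openSet :=
    ⟨⟨by simp only; linarith, by simp only; linarith⟩,
     ⟨by simp only; linarith, by simp only; linarith⟩⟩
  exact Set.disjoint_left.mp hdisj mem1 mem2

lemma not_disjoint_of_mem_Ico {A A' : Rect} {u v : ℝ}
    (h1 : u ∈ Set.Ico A.a A.b) (h2 : v ∈ Set.Ico A.c A.d)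
    (h1' : u ∈ Set.Ico A'.a A'.b) (h2' : v ∈ Set.Ico A'.c A'.d) :
    ¬ Disjoint A.openSet A'.openSet := by
  obtain ⟨ha, hb⟩ := h1
  obtain ⟨hc, hd⟩ := h2
  obtain ⟨ha', hb'⟩ := h1'
  obtain ⟨hc', hd'⟩ := h2'
  intro hdisj
  set ε := min (min A.b A'.b - u) (min A.d A'.d - v) with hε
  have hε1 : ε ≤ min A.b A'.b - u := min_le_left _ _
  have hε2 : ε ≤ min A.d A'.d - v := min_le_right _ _
  have hm1 : u < min A.b A'.b := lt_min hb hb'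
  have hm2 : v < min A.d A'.d := lt_min hd hd'
  have hε0 : 0 < ε := lt_min (by linarith) (by linarith)
  have hx1 : min A.b A'.b ≤ A.b := min_le_left _ _
  have hx2 : min A.b A'.b ≤ A'.b := min_le_right _ _
  have hy1 : min A.d A'.d ≤ A.d := min_le_left _ _
  have hy2 : min A.d A'.d ≤ A'.d := min_le_right _ _
  have mem1 : (u + ε/2, v + ε/2) ∈ A.openSet :=
    ⟨⟨by simp only; linarith, by simp only; linarith⟩,
     ⟨by simp only; linarith, by simp only; linarith⟩⟩
  have mem2 : (u + ε/2, v + ε/2) ∈ A'.openSet :=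
    ⟨⟨by simp only; linarith, by simp only; linarith⟩,
     ⟨by simp only; linarith, by simp only; linarith⟩⟩
  exact Set.disjoint_left.mp hdisj mem1 mem2

lemma oneD_left {a b α β : ℝ} (hab : α ≤ β) (h1 : β ∈ Set.Ioc a b)
    (h2 : α ∉ Set.Ioc a b) : a ∈ Set.Ico α β := by
  obtain ⟨hb1, hb2⟩ := h1
  simp only [Set.mem_Ioc, not_and, not_le] at h2
  refine ⟨?_, hb1⟩
  by_contra hcon
  push_neg at hcon
  have := h2 hcon
  linarith

lemma oneD_right {a b α β : ℝ} (hab : α ≤ β) (h1 : α ∈ Set.Ioc a b)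
    (h2 : β ∉ Set.Ioc a b) : b ∈ Set.Ico α β := by
  obtain ⟨h1a, h1b⟩ := h1
  simp only [Set.mem_Ioc, not_and, not_le] at h2
  refine ⟨h1b, ?_⟩
  exact h2 (by linarith)

open scoped Classical in
lemma card_filter_eps_le (P : Finset Rect)
    (hPd : (P : Set Rect).Pairwise fun Q Q' => Disjoint Q.openSet Q'.openSet) (A : Rect) :
    (P.filter fun Q => RectEps Q A ≠ 0).card ≤ 4 := by
  have h4 : (Finset.univ : Finset (Bool × Bool)).card = 4 := by decide
  rw [← h4]
  apply Finset.card_le_card_of_injOn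
    (fun Q => ((decide (A.b ∈ Set.Ioc Q.a Q.b) : Bool), (decide (A.d ∈ Set.Ioc Q.c Q.d) : Bool)))
    (fun _ _ => Finset.mem_univ _)
  intro Q hQ Q' hQ' heq
  simp only [Finset.coe_filter, Set.mem_setOf_eq] at hQ hQ'
  obtain ⟨hQP, hQe⟩ := hQ
  obtain ⟨hQ'P, hQ'e⟩ := hQ'
  by_contra hne
  have hdisj := hPd hQP hQ'P hne
  have hbx : (A.b ∈ Set.Ioc Q.a Q.b) ↔ (A.b ∈ Set.Ioc Q'.a Q'.b) := by
    exact decide_eq_decide.mp (congrArg Prod.fst heq)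
  have hdy : (A.d ∈ Set.Ioc Q.c Q.d) ↔ (A.d ∈ Set.Ioc Q'.c Q'.d) := by
    exact decide_eq_decide.mp (congrArg Prod.snd heq)
  have hzx : ∃ u, u ∈ Set.Ioc Q.a Q.b ∧ u ∈ Set.Ioc Q'.a Q'.b := by
    by_cases hc : A.b ∈ Set.Ioc Q.a Q.b
    · exact ⟨A.b, hc, hbx.mp hc⟩
    · rcases rectEps_ne_zero_x hQe with ⟨m1, m2⟩ | ⟨m1, m2⟩
      · exact absurd m1 hc
      rcases rectEps_ne_zero_x hQ'e with ⟨m1', m2'⟩ | ⟨m1', m2'⟩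
      · exact absurd (hbx.mpr m1') hc
      exact ⟨A.a, m1, m1'⟩
  have hzy : ∃ v, v ∈ Set.Ioc Q.c Q.d ∧ v ∈ Set.Ioc Q'.c Q'.d := by
    by_cases hc : A.d ∈ Set.Ioc Q.c Q.d
    · exact ⟨A.d, hc, hdy.mp hc⟩
    · rcases rectEps_ne_zero_y hQe with ⟨m1, m2⟩ | ⟨m1, m2⟩
      · exact absurd m1 hc
      rcases rectEps_ne_zero_y hQ'e with ⟨m1', m2'⟩ | ⟨m1', m2'⟩
      · exact absurd (hdy.mpr m1') hc
      exact ⟨A.c, m1, m1'⟩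
  obtain ⟨u, hu, hu'⟩ := hzx
  obtain ⟨v, hv, hv'⟩ := hzy
  exact not_disjoint_of_mem_halfOpen (z := (u, v)) ⟨hu, hv⟩ ⟨hu', hv'⟩ hdisj

open scoped Classical in
lemma card_filter_eps_le' (Q : Rect) (P' : Finset Rect)
    (hv : ∀ A ∈ P', A.Valid)
    (hP'd : (P' : Set Rect).Pairwise fun A A' => Disjoint A.openSet A'.openSet) :
    (P'.filter fun A => RectEps Q A ≠ 0).card ≤ 4 := by
  have h4 : (Finset.univ : Finset (Bool × Bool)).card = 4 := by decide
  rw [← h4]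
  apply Finset.card_le_card_of_injOn
    (fun A => ((decide (A.b ∈ Set.Ioc Q.a Q.b) : Bool), (decide (A.d ∈ Set.Ioc Q.c Q.d) : Bool)))
    (fun _ _ => Finset.mem_univ _)
  intro A hA A' hA' heq
  simp only [Finset.coe_filter, Set.mem_setOf_eq] at hA hA'
  obtain ⟨hAP, hAe⟩ := hA
  obtain ⟨hA'P, hA'e⟩ := hA'
  by_contra hne
  have hdisj := hP'd hAP hA'P hne
  have hbx : (A.b ∈ Set.Ioc Q.a Q.b) ↔ (A'.b ∈ Set.Ioc Q.a Q.b) := by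
    exact decide_eq_decide.mp (congrArg Prod.fst heq)
  have hdy : (A.d ∈ Set.Ioc Q.c Q.d) ↔ (A'.d ∈ Set.Ioc Q.c Q.d) := by
    exact decide_eq_decide.mp (congrArg Prod.snd heq)
  have hzx : ∃ u, u ∈ Set.Ico A.a A.b ∧ u ∈ Set.Ico A'.a A'.b := by
    by_cases hc : A.b ∈ Set.Ioc Q.a Q.b
    · refine ⟨Q.a, ?_, ?_⟩
      · rcases rectEps_ne_zero_x hAe with ⟨m1, m2⟩ | ⟨m1, m2⟩
        · exact oneD_left (hv A hAP).1 m1 m2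
        · exact absurd hc m2
      · rcases rectEps_ne_zero_x hA'e with ⟨m1, m2⟩ | ⟨m1, m2⟩
        · exact oneD_left (hv A' hA'P).1 m1 m2
        · exact absurd (hbx.mp hc) m2
    · refine ⟨Q.b, ?_, ?_⟩
      · rcases rectEps_ne_zero_x hAe with ⟨m1, m2⟩ | ⟨m1, m2⟩
        · exact absurd m1 hc
        · exact oneD_right (hv A hAP).1 m1 m2
      · rcases rectEps_ne_zero_x hA'e with ⟨m1, m2⟩ | ⟨m1, m2⟩
        · exact absurd m1 (fun h => hc (hbx.mpr h))
        · exact oneD_right (hv A' hA'P).1 m1 m2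
  have hzy : ∃ v, v ∈ Set.Ico A.c A.d ∧ v ∈ Set.Ico A'.c A'.d := by
    by_cases hc : A.d ∈ Set.Ioc Q.c Q.d
    · refine ⟨Q.c, ?_, ?_⟩
      · rcases rectEps_ne_zero_y hAe with ⟨m1, m2⟩ | ⟨m1, m2⟩
        · exact oneD_left (hv A hAP).2 m1 m2
        · exact absurd hc m2
      · rcases rectEps_ne_zero_y hA'e with ⟨m1, m2⟩ | ⟨m1, m2⟩
        · exact oneD_left (hv A' hA'P).2 m1 m2
        · exact absurd (hdy.mp hc) m2
    · refine ⟨Q.d, ?_, ?_⟩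
      · rcases rectEps_ne_zero_y hAe with ⟨m1, m2⟩ | ⟨m1, m2⟩
        · exact absurd m1 hc
        · exact oneD_right (hv A hAP).2 m1 m2
      · rcases rectEps_ne_zero_y hA'e with ⟨m1, m2⟩ | ⟨m1, m2⟩
        · exact absurd m1 (fun h => hc (hdy.mpr h))
        · exact oneD_right (hv A' hA'P).2 m1 m2
  obtain ⟨u, hu, hu'⟩ := hzx
  obtain ⟨v, hv1, hv1'⟩ := hzy
  exact not_disjoint_of_mem_Ico hu hv1 hu' hv1' hdisj

lemma rpow_sum_le_four {s : Finset Rect} {f : Rect → ℝ} (hf : ∀ i ∈ s, 0 ≤ f i)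
    {q : ℝ} (hq : 1 ≤ q) (hcard : s.card ≤ 4) :
    (∑ i ∈ s, f i) ^ q ≤ 4 ^ (q - 1) * ∑ i ∈ s, f i ^ q := by
  rcases s.eq_empty_or_nonempty with rfl | hne
  · simp [Real.zero_rpow (by linarith : q ≠ 0)]
  have hn0 : (0:ℝ) < s.card := by
    exact_mod_cast Finset.card_pos.mpr hne
  have key := Real.rpow_arith_mean_le_arith_mean_rpow s (fun _ => ((s.card : ℝ))⁻¹) f
    (fun i _ => by positivity) (by
      rw [Finset.sum_const, nsmul_eq_mul]
      field_simp) hf hq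
  rw [← Finset.mul_sum, ← Finset.mul_sum,
    Real.mul_rpow (by positivity) (Finset.sum_nonneg hf)] at key
  have hsum_nonneg : 0 ≤ ∑ i ∈ s, f i ^ q :=
    Finset.sum_nonneg fun i hi => Real.rpow_nonneg (hf i hi) q
  have e1 : ((s.card : ℝ)⁻¹) ^ q = ((s.card : ℝ) ^ q)⁻¹ := Real.inv_rpow hn0.le q
  have hpowpos : (0:ℝ) < (s.card : ℝ) ^ q := Real.rpow_pos_of_pos hn0 q
  rw [e1] at key
  -- key : (card^q)⁻¹ * (∑ f)^q ≤ card⁻¹ * ∑ f^q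
  have key2 : (∑ i ∈ s, f i) ^ q ≤ (s.card : ℝ) ^ (q - 1) * ∑ i ∈ s, f i ^ q := by
    have h3 := mul_le_mul_of_nonneg_left key hpowpos.le
    rw [← mul_assoc, mul_inv_cancel₀ hpowpos.ne', one_mul, ← mul_assoc] at h3
    have e2 : (s.card : ℝ) ^ q * (s.card : ℝ)⁻¹ = (s.card : ℝ) ^ (q - 1) := by
      rw [← Real.rpow_neg_one (s.card : ℝ), ← Real.rpow_add hn0, sub_eq_add_neg]
    rwa [e2] at h3
  refine key2.trans (mul_le_mul_of_nonneg_right ?_ hsum_nonneg)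
  exact Real.rpow_le_rpow hn0.le (by exact_mod_cast hcard) (by linarith)

open scoped Classical in
lemma per_partition_bound (P P' : Finset Rect) (c : Rect → ℝ)
    (hPd : (P : Set Rect).Pairwise fun Q Q' => Disjoint Q.openSet Q'.openSet)
    (hP'v : ∀ A ∈ P', A.Valid)
    (hP'd : (P' : Set Rect).Pairwise fun A A' => Disjoint A.openSet A'.openSet)
    (y : ℝ × ℝ → ℝ)
    (hy : y = fun z => ∑ Q ∈ P, c Q * Set.indicator Q.halfOpen (fun _ => (1:ℝ)) z)
    {q : ℝ} (hq : 1 < q) :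
    ∑ A ∈ P', ENNReal.ofReal |Rect.inc y A| ^ q ≤
      (4:ℝ≥0∞) ^ q * ∑ Q ∈ P, ENNReal.ofReal (|c Q| ^ q) := by
  have hq0 : 0 < q := lt_trans one_pos hq
  have hinc : ∀ A, Rect.inc y A = ∑ Q ∈ P, c Q * RectEps Q A := by
    intro A
    simp only [hy, Rect.inc]
    rw [← Finset.sum_sub_distrib, ← Finset.sum_sub_distrib, ← Finset.sum_add_distrib]
    refine Finset.sum_congr rfl fun Q _ => ?_
    have h := inc_halfOpen_indicator Q A
    simp only [Rect.inc] at h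
    linear_combination c Q * h
  have habs : ∀ A, |Rect.inc y A| ≤ ∑ Q ∈ P.filter (fun Q => RectEps Q A ≠ 0), |c Q| := by
    intro A
    rw [hinc A, ← Finset.sum_filter_of_ne (p := fun Q => RectEps Q A ≠ 0)
      (fun Qx _ hfne heps => hfne (by rw [heps, mul_zero]))]
    refine (Finset.abs_sum_le_sum_abs _ _).trans (Finset.sum_le_sum fun Q _ => ?_)
    rw [abs_mul]
    exact mul_le_of_le_one_right (abs_nonneg _) (abs_rectEps_le Q A)
  have hA : ∀ A ∈ P', ENNReal.ofReal |Rect.inc y A| ^ q ≤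
      ENNReal.ofReal (4 ^ (q - 1)) *
        ∑ Q ∈ P.filter (fun Q => RectEps Q A ≠ 0), ENNReal.ofReal (|c Q| ^ q) := by
    intro A _
    have h1 : |Rect.inc y A| ^ q ≤
        4 ^ (q - 1) * ∑ Q ∈ P.filter (fun Q => RectEps Q A ≠ 0), |c Q| ^ q :=
      le_trans (Real.rpow_le_rpow (abs_nonneg _) (habs A) hq0.le)
        (rpow_sum_le_four (fun i _ => abs_nonneg _) hq.le (card_filter_eps_le P hPd A))
    calc ENNReal.ofReal |Rect.inc y A| ^ q
        = ENNReal.ofReal (|Rect.inc y A| ^ q) :=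
          ENNReal.ofReal_rpow_of_nonneg (abs_nonneg _) hq0.le
      _ ≤ ENNReal.ofReal (4 ^ (q-1) * ∑ Q ∈ P.filter (fun Q => RectEps Q A ≠ 0), |c Q| ^ q) :=
          ENNReal.ofReal_le_ofReal h1
      _ = ENNReal.ofReal (4 ^ (q-1)) *
            ENNReal.ofReal (∑ Q ∈ P.filter (fun Q => RectEps Q A ≠ 0), |c Q| ^ q) := by
          rw [ENNReal.ofReal_mul (by positivity)]
      _ = ENNReal.ofReal (4 ^ (q-1)) *
            ∑ Q ∈ P.filter (fun Q => RectEps Q A ≠ 0), ENNReal.ofReal (|c Q| ^ q) := by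
          rw [ENNReal.ofReal_sum_of_nonneg (fun Q _ => Real.rpow_nonneg (abs_nonneg _) q)]
  have hswap : ∑ A ∈ P', ∑ Q ∈ P.filter (fun Q => RectEps Q A ≠ 0), ENNReal.ofReal (|c Q| ^ q)
      ≤ 4 * ∑ Q ∈ P, ENNReal.ofReal (|c Q| ^ q) := by
    have step : ∀ A, ∑ Q ∈ P.filter (fun Q => RectEps Q A ≠ 0), ENNReal.ofReal (|c Q| ^ q)
        = ∑ Q ∈ P, if RectEps Q A ≠ 0 then ENNReal.ofReal (|c Q| ^ q) else 0 :=
      fun A => Finset.sum_filter _ _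
    calc ∑ A ∈ P', ∑ Q ∈ P.filter (fun Q => RectEps Q A ≠ 0), ENNReal.ofReal (|c Q| ^ q)
        = ∑ Q ∈ P, ∑ A ∈ P', if RectEps Q A ≠ 0 then ENNReal.ofReal (|c Q| ^ q) else 0 := by
          simp_rw [step]; exact Finset.sum_comm
      _ ≤ ∑ Q ∈ P, 4 * ENNReal.ofReal (|c Q| ^ q) := by
          refine Finset.sum_le_sum fun Q _ => ?_
          rw [← Finset.sum_filter, Finset.sum_const, nsmul_eq_mul]
          exact mul_le_mul_left
            (by exact_mod_cast card_filter_eps_le' Q P' hP'v hP'd) _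
      _ = 4 * ∑ Q ∈ P, ENNReal.ofReal (|c Q| ^ q) := (Finset.mul_sum _ _ _).symm
  calc ∑ A ∈ P', ENNReal.ofReal |Rect.inc y A| ^ q
      ≤ ∑ A ∈ P', ENNReal.ofReal (4 ^ (q-1)) *
          ∑ Q ∈ P.filter (fun Q => RectEps Q A ≠ 0), ENNReal.ofReal (|c Q| ^ q) :=
        Finset.sum_le_sum hA
    _ = ENNReal.ofReal (4 ^ (q-1)) * ∑ A ∈ P', ∑ Q ∈ P.filter (fun Q => RectEps Q A ≠ 0),
          ENNReal.ofReal (|c Q| ^ q) := by rw [Finset.mul_sum]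
    _ ≤ ENNReal.ofReal (4 ^ (q-1)) * (4 * ∑ Q ∈ P, ENNReal.ofReal (|c Q| ^ q)) :=
        mul_le_mul_right hswap _
    _ = (4:ℝ≥0∞) ^ q * ∑ Q ∈ P, ENNReal.ofReal (|c Q| ^ q) := by
        rw [← mul_assoc]
        congr 1
        have h44 : (4:ℝ) ^ (q-1) * 4 = 4 ^ q := by
          rw [Real.rpow_sub (by norm_num : (0:ℝ) < 4), Real.rpow_one]
          field_simp
        calc ENNReal.ofReal (4 ^ (q-1)) * 4
            = ENNReal.ofReal (4 ^ (q-1)) * ENNReal.ofReal 4 := by norm_num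
          _ = ENNReal.ofReal ((4:ℝ) ^ (q-1) * 4) := (ENNReal.ofReal_mul (by positivity)).symm
          _ = ENNReal.ofReal ((4:ℝ) ^ q) := by rw [h44]
          _ = ENNReal.ofReal 4 ^ q :=
              (ENNReal.ofReal_rpow_of_nonneg (by norm_num : (0:ℝ) ≤ 4) hq0.le).symm
          _ = (4:ℝ≥0∞) ^ q := by norm_num

theorem controlled_var_of_dual_step_function (p p' T : ℝ) (hp : 1 ≤ p)
    (hconj : 1 / p + 1 / p' = 1) (hT : 0 < T)
    (x : ℝ × ℝ → ℝ) (P : Finset Rect) (hP : IsPartition (Rect.mk 0 T 0 T) P)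
    (y : ℝ × ℝ → ℝ)
    (hy : y = fun z => ∑ Q ∈ P,
      (|Rect.inc x Q| ^ (p - 1) * Real.sign (Rect.inc x Q)) *
        Set.indicator Q.halfOpen (fun _ => (1 : ℝ)) z) :
    cVarSum p' y (Rect.mk 0 T 0 T) ^ (1 / p') ≤
      4 * (∑ Q ∈ P, ENNReal.ofReal |Rect.inc x Q| ^ p) ^ (1 / p') := by
  rcases eq_or_lt_of_le hp with hp1 | hp1
  · -- p = 1, so 1/p' = 0 and both sides are trivial
    have h0 : 1 / p' = 0 := by
      have h11 : (1:ℝ)/1 = 1 := by norm_num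
      rw [← hp1, h11] at hconj
      linarith
    rw [h0, ENNReal.rpow_zero, ENNReal.rpow_zero, mul_one]
    exact (by norm_num : (1:ℝ≥0∞) ≤ 4)
  · have hp0 : 0 < p := lt_trans one_pos hp1
    have hp'inv : 1 / p' = (p - 1) / p := by
      rw [sub_div, div_self hp0.ne']
      linarith
    have h1p' : 0 < 1 / p' := hp'inv ▸ div_pos (by linarith) hp0
    have hp'pos : 0 < p' := one_div_pos.mp h1p'
    have hp'ne : p' ≠ 0 := hp'pos.ne'
    have hkey : (p - 1) * p' = p := by
      have h := hp'inv
      field_simp at h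
      linear_combination -h
    have hp'1 : 1 < p' := by nlinarith [hkey]
    have main : cVarSum p' y (Rect.mk 0 T 0 T) ≤
        (4:ℝ≥0∞) ^ p' * ∑ Q ∈ P, ENNReal.ofReal |Rect.inc x Q| ^ p := by
      simp only [cVarSum]
      refine iSup_le fun P' => iSup_le fun hP' => ?_
      obtain ⟨hP'v, hP'd, -⟩ := hP'
      obtain ⟨-, hPd, -⟩ := hP
      refine le_trans (per_partition_bound P P'
        (fun Q => |Rect.inc x Q| ^ (p - 1) * Real.sign (Rect.inc x Q))
        hPd hP'v hP'd y hy hp'1) ?_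
      refine mul_le_mul_right (Finset.sum_le_sum fun Q _ => ?_) _
      have hsgn : |Real.sign (Rect.inc x Q)| ≤ 1 := by
        rcases lt_trichotomy (Rect.inc x Q) 0 with h | h | h
        · rw [Real.sign_of_neg h]; norm_num
        · rw [h, Real.sign_zero]; norm_num
        · rw [Real.sign_of_pos h]; norm_num
      have h1 : |(|Rect.inc x Q| ^ (p-1) * Real.sign (Rect.inc x Q))| ≤
          |Rect.inc x Q| ^ (p-1) := by
        rw [abs_mul, abs_of_nonneg (Real.rpow_nonneg (abs_nonneg _) _)]
        exact mul_le_of_le_one_right (Real.rpow_nonneg (abs_nonneg _) _) hsgn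
      have h2 : |(|Rect.inc x Q| ^ (p-1) * Real.sign (Rect.inc x Q))| ^ p' ≤
          |Rect.inc x Q| ^ p := by
        calc |(|Rect.inc x Q| ^ (p-1) * Real.sign (Rect.inc x Q))| ^ p'
            ≤ (|Rect.inc x Q| ^ (p-1)) ^ p' :=
              Real.rpow_le_rpow (abs_nonneg _) h1 hp'pos.le
          _ = |Rect.inc x Q| ^ ((p-1) * p') := (Real.rpow_mul (abs_nonneg _) _ _).symm
          _ = |Rect.inc x Q| ^ p := by rw [hkey]
      calc ENNReal.ofReal (|(|Rect.inc x Q| ^ (p-1) * Real.sign (Rect.inc x Q))| ^ p')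
          ≤ ENNReal.ofReal (|Rect.inc x Q| ^ p) := ENNReal.ofReal_le_ofReal h2
        _ = ENNReal.ofReal |Rect.inc x Q| ^ p :=
            (ENNReal.ofReal_rpow_of_nonneg (abs_nonneg _) hp0.le).symm
    calc cVarSum p' y (Rect.mk 0 T 0 T) ^ (1/p')
        ≤ ((4:ℝ≥0∞) ^ p' * ∑ Q ∈ P, ENNReal.ofReal |Rect.inc x Q| ^ p) ^ (1/p') :=
          ENNReal.rpow_le_rpow main h1p'.le
      _ = 4 * (∑ Q ∈ P, ENNReal.ofReal |Rect.inc x Q| ^ p) ^ (1/p') := by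
          rw [ENNReal.mul_rpow_of_nonneg _ _ h1p'.le, ← ENNReal.rpow_mul,
            mul_one_div, div_self hp'ne, ENNReal.rpow_one]
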